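/- (Deterministic core of Lemma 2: Lasso error bound under a restricted eigenvalue condition.) Let L : ℝ^p → ℝ be convex and twice continuously differentiable, let β* ∈ ℝ^p with support S* = {j : β*_j ≠ 0} of cardinality q ≥ 1, let λ > 0, and let β̃ be a global minimizer of β ↦ L(β) + λ‖β‖₁. Suppose ‖∇L(β*)‖_∞ ≤ λ/2, and suppose there is b₁ > 0 such that for every β on the line segment between β* and β̃ and every w ≠ 0 with ‖w_{S*ᶜ}‖₁ ≤ 3‖w_{S*}‖₁, one has wᵀ∇²L(β)w ≥ b₁‖w_{S*}‖₂². Then ‖β̃ − β*‖₂ ≤ ‖β̃ − β*‖₁ ≤ 16 q λ / b₁. -/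

import Mathlib

open scoped BigOperators Classical

noncomputable section

/-- Deterministic core of Lemma 2: under the restricted eigenvalue condition along the
segment joining `β*` and the Lasso minimizer `β̃`, and `‖∇L(β*)‖_∞ ≤ λ/2`, the Lasso
error satisfies `‖β̃ − β*‖₂ ≤ ‖β̃ − β*‖₁ ≤ 16 q λ / b₁`, with `q = card S* ≥ 1`. -/
theorem lasso_error_bound
    {p : ℕ} (L : EuclideanSpace ℝ (Fin p) → ℝ)
    (hconv : ConvexOn ℝ Set.univ L) (hsmooth : ContDiff ℝ 2 L)
    (βs : EuclideanSpace ℝ (Fin p))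
    (q : ℕ) (hq : (Finset.univ.filter (fun j => βs j ≠ 0)).card = q) (hq1 : 1 ≤ q)
    (lam : ℝ) (hlam : 0 < lam)
    (βt : EuclideanSpace ℝ (Fin p))
    (hmin : ∀ β : EuclideanSpace ℝ (Fin p),
      L βt + lam * ∑ j, |βt j| ≤ L β + lam * ∑ j, |β j|)
    (hgrad : ∀ j : Fin p, |fderiv ℝ L βs (EuclideanSpace.single j 1)| ≤ lam / 2)
    (b₁ : ℝ) (hb₁ : 0 < b₁)
    (hRE : ∀ β ∈ segment ℝ βs βt, ∀ w : EuclideanSpace ℝ (Fin p), w ≠ 0 →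
      (∑ j ∈ Finset.univ.filter (fun j => βs j = 0), |w j| ≤
        3 * ∑ j ∈ Finset.univ.filter (fun j => βs j ≠ 0), |w j|) →
      b₁ * ∑ j ∈ Finset.univ.filter (fun j => βs j ≠ 0), (w j) ^ 2 ≤
        fderiv ℝ (fun x => fderiv ℝ L x) β w w) :
    ‖βt - βs‖ ≤ ∑ j, |(βt - βs) j| ∧
      ∑ j, |(βt - βs) j| ≤ 16 * q * lam / b₁ := by
  classical
  set w : EuclideanSpace ℝ (Fin p) := βt - βs with hwdef
  -- Part 1 : ℓ² ≤ ℓ¹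
  have part1 : ‖w‖ ≤ ∑ j, |w j| := by
    rw [EuclideanSpace.norm_eq]
    have h1 : ∑ j, ‖w j‖^2 ≤ (∑ j, |w j|)^2 := by
      simpa [Real.norm_eq_abs] using
        Finset.sum_sq_le_sq_sum_of_nonneg (s := Finset.univ)
          (f := fun j => |w j|) (fun i _ => abs_nonneg _)
    calc Real.sqrt (∑ j, ‖w j‖^2) ≤ Real.sqrt ((∑ j, |w j|)^2) := Real.sqrt_le_sqrt h1
      _ = ∑ j, |w j| := Real.sqrt_sq (by positivity)
  refine ⟨part1, ?_⟩
  have hwj : ∀ j, w j = βt j - βs j := fun j => rfl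
  set S : Finset (Fin p) := Finset.univ.filter (fun j => βs j ≠ 0) with hSdef
  set Sc : Finset (Fin p) := Finset.univ.filter (fun j => βs j = 0) with hScdef
  have hqpos : (0:ℝ) ≤ (q:ℝ) := Nat.cast_nonneg q
  have hRHS : (0:ℝ) ≤ 16 * q * lam / b₁ := by positivity
  -- splitting of sums
  have hsplit : ∀ f : Fin p → ℝ, ∑ j ∈ S, f j + ∑ j ∈ Sc, f j = ∑ j, f j := by
    intro f
    have h := Finset.sum_filter_add_sum_filter_not Finset.univ (fun j => βs j ≠ 0) f
    have : Finset.univ.filter (fun j => ¬ βs j ≠ 0) = Sc := by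
      simp [hScdef, not_not]
    rw [this] at h; exact h
  by_cases hwz : w = 0
  · rw [hwz]; simpa using hRHS
  -- derivatives along the segment
  set a1 : ℝ := ∑ j ∈ S, |w j| with ha1def
  set a2 : ℝ := ∑ j ∈ Sc, |w j| with ha2def
  have ha1nn : 0 ≤ a1 := Finset.sum_nonneg fun _ _ => abs_nonneg _
  have ha2nn : 0 ≤ a2 := Finset.sum_nonneg fun _ _ => abs_nonneg _
  set c : ℝ → EuclideanSpace ℝ (Fin p) := fun t => βs + t • w with hcdef
  have hc0 : c 0 = βs := by simp [hcdef]
  have hc1 : c 1 = βt := by simp [hcdef, hwdef]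
  have hLdiff : Differentiable ℝ L := hsmooth.differentiable (by norm_num)
  have hF : ContDiff ℝ 1 (fderiv ℝ L) := hsmooth.fderiv_right (by norm_num)
  have hc : ∀ t : ℝ, HasDerivAt c w t := by
    intro t
    simpa [hcdef] using (((hasDerivAt_id t).smul_const w).const_add βs)
  set g : ℝ → ℝ := fun t => L (c t) with hgdef
  set g' : ℝ → ℝ := fun t => fderiv ℝ L (c t) w with hg'def
  set g'' : ℝ → ℝ := fun t => fderiv ℝ (fderiv ℝ L) (c t) w w with hg''def
  have hg : ∀ t : ℝ, HasDerivAt g (g' t) t := fun t =>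
    ((hLdiff (c t)).hasFDerivAt.comp_hasDerivAt t (hc t))
  have hg' : ∀ t : ℝ, HasDerivAt g' (g'' t) t := by
    intro t
    have h1 : HasFDerivAt (fderiv ℝ L) (fderiv ℝ (fderiv ℝ L) (c t)) (c t) :=
      ((hF.differentiable (by norm_num)) (c t)).hasFDerivAt
    have h2 : HasDerivAt (fun s => fderiv ℝ L (c s))
        (fderiv ℝ (fderiv ℝ L) (c t) w) t := h1.comp_hasDerivAt t (hc t)
    simpa using h2.clm_apply (hasDerivAt_const t w)
  -- convexity of g
  have hgconv : ConvexOn ℝ Set.univ g := by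
    have h := hconv.comp_affineMap (AffineMap.lineMap βs βt : ℝ →ᵃ[ℝ] EuclideanSpace ℝ (Fin p))
    have heq : (L ∘ (AffineMap.lineMap βs βt : ℝ →ᵃ[ℝ] EuclideanSpace ℝ (Fin p))) = g := by
      funext t
      simp [hgdef, hcdef, AffineMap.lineMap_apply, hwdef]
      congr 1
      module
    rw [heq, Set.preimage_univ] at h
    exact h
  have hgrad_ineq : ∀ a b : ℝ, a < b → (b - a) * g' a ≤ g b - g a := by
    intro a b hab
    have h := hgconv.le_slope_of_hasDerivAt (Set.mem_univ a) (Set.mem_univ b) hab (hg a)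
    rw [slope_def_field] at h
    have h2 := (le_div_iff₀ (sub_pos.2 hab)).1 h
    linarith [h2]
  -- Step A : minimality
  have hA : g 1 - g 0 ≤ lam * (a1 - a2) := by
    have hm := hmin βs
    show L (c 1) - L (c 0) ≤ lam * (a1 - a2)
    rw [hc0, hc1]
    have hS1 : ∑ j, |βs j| = ∑ j ∈ S, |βs j| := by
      rw [← hsplit (fun j => |βs j|)]
      have : ∑ j ∈ Sc, |βs j| = 0 := by
        apply Finset.sum_eq_zero
        intro j hj
        rw [hScdef] at hj
        simp at hj
        simp [hj]
      linarith [this]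
    have hT1 : ∑ j, |βt j| = ∑ j ∈ S, |βt j| + ∑ j ∈ Sc, |w j| := by
      rw [← hsplit (fun j => |βt j|)]
      congr 1
      apply Finset.sum_congr rfl
      intro j hj
      rw [hScdef] at hj
      simp at hj
      rw [hwj j, hj, sub_zero]
    have hpt : ∑ j ∈ S, |βs j| - ∑ j ∈ S, |βt j| ≤ a1 := by
      rw [ha1def, ← Finset.sum_sub_distrib]
      apply Finset.sum_le_sum
      intro j _
      calc |βs j| - |βt j| ≤ |βs j - βt j| := abs_sub_abs_le_abs_sub _ _
        _ = |w j| := by rw [hwj j, abs_sub_comm]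
    have : L βt - L βs ≤ lam * (∑ j, |βs j| - ∑ j, |βt j|) := by nlinarith [hm]
    calc L βt - L βs ≤ lam * (∑ j, |βs j| - ∑ j, |βt j|) := this
      _ = lam * ((∑ j ∈ S, |βs j| - ∑ j ∈ S, |βt j|) - a2) := by
          rw [hS1, hT1, ha2def]; ring
      _ ≤ lam * (a1 - a2) := by
          apply mul_le_mul_of_nonneg_left _ hlam.le
          linarith [hpt]
  -- Step B : gradient bound
  have hB : |g' 0| ≤ lam / 2 * (a1 + a2) := by
    have hdecomp : w = ∑ j, w j • EuclideanSpace.single j (1:ℝ) := by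
      ext i
      rw [show (∑ j, w j • EuclideanSpace.single j (1:ℝ)) i
          = ∑ j, (w j • EuclideanSpace.single j (1:ℝ)) i from by rw [WithLp.ofLp_sum, Finset.sum_apply]]
      simp [EuclideanSpace.single_apply]
    have hval : g' 0 = ∑ j, w j * fderiv ℝ L βs (EuclideanSpace.single j 1) := by
      rw [hg'def]
      simp only [hc0]
      conv_lhs => rw [hdecomp]
      rw [map_sum]
      simp [smul_eq_mul]
    rw [hval]
    calc |∑ j, w j * fderiv ℝ L βs (EuclideanSpace.single j 1)|
        ≤ ∑ j, |w j * fderiv ℝ L βs (EuclideanSpace.single j 1)| :=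
          Finset.abs_sum_le_sum_abs _ _
      _ ≤ ∑ j, |w j| * (lam / 2) := by
          apply Finset.sum_le_sum
          intro j _
          rw [abs_mul]
          exact mul_le_mul_of_nonneg_left (hgrad j) (abs_nonneg _)
      _ = lam / 2 * ∑ j, |w j| := by rw [← Finset.sum_mul]; ring
      _ = lam / 2 * (a1 + a2) := by rw [← hsplit (fun j => |w j|), ha1def, ha2def]
  -- convexity at 0,1 and cone condition
  have hD0 : g' 0 ≤ g 1 - g 0 := by
    have := hgrad_ineq 0 1 one_pos
    simpa using this
  have hcone : a2 ≤ 3 * a1 := by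
    have h1 : -(lam / 2 * (a1 + a2)) ≤ g' 0 := neg_le_of_abs_le hB
    have h2 : lam / 2 * a2 ≤ lam / 2 * (3 * a1) := by linarith [hA, hD0, h1]
    have := (mul_le_mul_iff_right₀ (by linarith : (0:ℝ) < lam / 2)).1 h2
    linarith
  -- restricted eigenvalue along the segment
  set c2 : ℝ := ∑ j ∈ S, (w j)^2 with hc2def
  have hc2nn : 0 ≤ c2 := Finset.sum_nonneg fun _ _ => sq_nonneg _
  have hseg : ∀ ξ : ℝ, ξ ∈ Set.Icc (0:ℝ) 1 → c ξ ∈ segment ℝ βs βt := by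
    intro ξ hξ
    rw [segment_eq_image']
    exact ⟨ξ, hξ, rfl⟩
  have hRE' : ∀ ξ ∈ Set.Icc (0:ℝ) 1, b₁ * c2 ≤ g'' ξ := by
    intro ξ hξ
    exact hRE (c ξ) (hseg ξ hξ) w hwz hcone
  -- MVT on g'
  have key : ∀ t : ℝ, 0 < t → t ≤ 1 → g' 0 + t * (b₁ * c2) ≤ g' t := by
    intro t ht ht1
    obtain ⟨ξ, hξ, hξeq⟩ := exists_hasDerivAt_eq_slope g' g'' ht
      (fun x _ => ((hg' x).continuousAt).continuousWithinAt)
      (fun x _ => hg' x)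
    have hξIcc : ξ ∈ Set.Icc (0:ℝ) 1 := ⟨hξ.1.le, hξ.2.le.trans ht1⟩
    have hre := hRE' ξ hξIcc
    rw [hξeq] at hre
    have := (le_div_iff₀ (by linarith : (0:ℝ) < t - 0)).1 hre
    linarith [this]
  -- combine over four subintervals
  have h14 := hgrad_ineq 0 (1/4) (by norm_num)
  have h24 := hgrad_ineq (1/4) (1/2) (by norm_num)
  have h34 := hgrad_ineq (1/2) (3/4) (by norm_num)
  have h44 := hgrad_ineq (3/4) 1 (by norm_num)
  have k1 := key (1/4) (by norm_num) (by norm_num)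
  have k2 := key (1/2) (by norm_num) (by norm_num)
  have k3 := key (3/4) (by norm_num) (by norm_num)
  have hB' : g' 0 ≥ -(lam / 2 * (a1 + a2)) := neg_le_of_abs_le hB
  have hmain : (3/8) * (b₁ * c2) ≤ (3/2) * lam * a1 := by
    linarith [hA, hB', h14, h24, h34, h44, k1, k2, k3, mul_nonneg hlam.le ha2nn]
  -- Cauchy–Schwarz on S
  have hCS : a1^2 ≤ (q:ℝ) * c2 := by
    have h := sq_sum_le_card_mul_sum_sq (s := S) (f := fun j => |w j|)
    have hcard : (S.card : ℝ) = (q:ℝ) := by exact_mod_cast congrArg Nat.cast hq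
    calc a1^2 = (∑ j ∈ S, |w j|)^2 := by rw [ha1def]
      _ ≤ (S.card : ℝ) * ∑ j ∈ S, |w j|^2 := by exact_mod_cast h
      _ = (q:ℝ) * c2 := by
          rw [hcard, hc2def]
          congr 1
          exact Finset.sum_congr rfl fun j _ => sq_abs _
  -- finish
  have hgoal : a1 + a2 ≤ 16 * q * lam / b₁ := by
    rcases eq_or_lt_of_le ha1nn with h0 | hpos
    · have : a2 ≤ 0 := by linarith [hcone]
      have ha2z : a2 = 0 := le_antisymm this ha2nn
      rw [← h0, ha2z]; simpa using hRHS
    · -- b₁ * a1^2 ≤ 4 * lam * q * a1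
      have h1 : b₁ * a1^2 ≤ b₁ * ((q:ℝ) * c2) := by
        exact mul_le_mul_of_nonneg_left hCS hb₁.le
      have h2 : (q:ℝ) * ((3/8) * (b₁ * c2)) ≤ (q:ℝ) * ((3/2) * lam * a1) :=
        mul_le_mul_of_nonneg_left hmain hqpos
      have h3 : b₁ * a1 ≤ 4 * lam * q := by
        have h4 : b₁ * a1 * a1 ≤ 4 * lam * (q:ℝ) * a1 := by linarith [h1, h2]
        exact le_of_mul_le_mul_right h4 hpos
      rw [le_div_iff₀ hb₁]
      have h5 : b₁ * a2 ≤ b₁ * (3 * a1) := mul_le_mul_of_nonneg_left hcone hb₁.le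
      linarith [h3, h5]
  calc ∑ j, |w j| = a1 + a2 := by rw [← hsplit (fun j => |w j|), ha1def, ha2def]
    _ ≤ 16 * q * lam / b₁ := hgoal
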